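/- Let P be the uniform distribution on {−1, 0, 1} ⊂ ℝ. Then the sets {−1, 1/2} and {−1/2, 1} are exactly the minimizers over pairs {a₁,a₂} ⊂ ℝ of E_P[min((X−a₁)², (X−a₂)²)], and the minimal value is 1/6. -/
import Mathlib

noncomputable def Phi6 (a b : ℝ) : ℝ :=
  (1 / 3) * (min ((-1 - a) ^ 2) ((-1 - b) ^ 2) + min (a ^ 2) (b ^ 2)
    + min ((1 - a) ^ 2) ((1 - b) ^ 2))

private lemma aux6 (x y : ℝ) (h : 2 * x ^ 2 + y ^ 2 = 0) : x = 0 ∧ y = 0 := by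
  have hx : x ^ 2 = 0 := le_antisymm (by nlinarith [sq_nonneg y]) (sq_nonneg x)
  have hy : y ^ 2 = 0 := le_antisymm (by nlinarith [sq_nonneg x]) (sq_nonneg y)
  exact ⟨pow_eq_zero_iff two_ne_zero |>.mp hx, pow_eq_zero_iff two_ne_zero |>.mp hy⟩

private lemma L1 (c : ℝ) : 1 / 2 ≤ (-1 - c) ^ 2 + c ^ 2 := by
  nlinarith [sq_nonneg (c + 1/2)]

private lemma L2 (c : ℝ) : 1 / 2 ≤ c ^ 2 + (1 - c) ^ 2 := by
  nlinarith [sq_nonneg (c - 1/2)]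

private lemma L3 (c : ℝ) : 2 ≤ (-1 - c) ^ 2 + (1 - c) ^ 2 := by
  nlinarith [sq_nonneg c]

theorem stmt6 :
    (∀ a b : ℝ, 1 / 6 ≤ Phi6 a b) ∧
    (∀ a b : ℝ, Phi6 a b = 1 / 6 ↔
      ({a, b} : Set ℝ) = {-1, 1 / 2} ∨ ({a, b} : Set ℝ) = {-1 / 2, 1}) := by
  have key : ∀ a b : ℝ, Phi6 a b = 1 / 6 →
      ({a, b} : Set ℝ) = {-1, 1 / 2} ∨ ({a, b} : Set ℝ) = {-1 / 2, 1} := by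
    intro a b h
    unfold Phi6 at h
    rcases le_total ((-1 - a) ^ 2) ((-1 - b) ^ 2) with h1 | h1 <;>
    rcases le_total (a ^ 2) (b ^ 2) with h2 | h2 <;>
    rcases le_total ((1 - a) ^ 2) ((1 - b) ^ 2) with h3 | h3 <;>
    simp only [min_eq_left h1, min_eq_right h1, min_eq_left h2, min_eq_right h2,
      min_eq_left h3, min_eq_right h3] at h
    -- aaa
    · exact absurd h (by have := L3 a; have := sq_nonneg a; intro h; linarith)
    -- aab
    · right
      obtain ⟨ha, hb⟩ := aux6 (a + 1/2) (1 - b) (by linear_combination 3 * h)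
      have ha' : a = -1 / 2 := by linarith
      have hb' : b = 1 := by linarith
      rw [ha', hb']
    -- aba
    · exact absurd h (by have := L3 a; have := sq_nonneg b; intro h; linarith)
    -- abb
    · left
      obtain ⟨ha, hb⟩ := aux6 (b - 1/2) (1 + a) (by linear_combination 3 * h)
      have ha' : a = -1 := by linarith
      have hb' : b = 1 / 2 := by linarith
      rw [ha', hb']
    -- baa
    · left
      obtain ⟨ha, hb⟩ := aux6 (a - 1/2) (1 + b) (by linear_combination 3 * h)
      have ha' : a = 1 / 2 := by linarith
      have hb' : b = -1 := by linarith
      rw [ha', hb']; exact Set.pair_comm (1 / 2) (-1)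
    -- bab
    · exact absurd h (by have := L3 b; have := sq_nonneg a; intro h; linarith)
    -- bba
    · right
      obtain ⟨ha, hb⟩ := aux6 (b + 1/2) (1 - a) (by linear_combination 3 * h)
      have ha' : a = 1 := by linarith
      have hb' : b = -1 / 2 := by linarith
      rw [ha', hb']; exact Set.pair_comm 1 (-1 / 2)
    -- bbb
    · exact absurd h (by have := L3 b; have := sq_nonneg b; intro h; linarith)
  constructor
  · intro a b
    unfold Phi6
    rcases le_total ((-1 - a) ^ 2) ((-1 - b) ^ 2) with h1 | h1 <;>
    rcases le_total (a ^ 2) (b ^ 2) with h2 | h2 <;>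
    rcases le_total ((1 - a) ^ 2) ((1 - b) ^ 2) with h3 | h3 <;>
    simp only [min_eq_left h1, min_eq_right h1, min_eq_left h2, min_eq_right h2,
      min_eq_left h3, min_eq_right h3] <;>
    linarith [L1 a, L1 b, L2 a, L2 b, L3 a, L3 b, sq_nonneg a, sq_nonneg b,
      sq_nonneg (1 - a), sq_nonneg (1 - b), sq_nonneg (-1 - a), sq_nonneg (-1 - b)]
  · intro a b
    constructor
    · exact key a b
    · rintro (h | h) <;> rw [Set.pair_eq_pair_iff] at h <;>
        rcases h with ⟨ha, hb⟩ | ⟨ha, hb⟩ <;> subst ha <;> subst hb <;>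
        norm_num [Phi6, min_def]
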